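/- Let K be a local field of characteristic p with residue field k of degree f over F_p, and let ℘(x) = x^p − x. Denote by bar(𝔭^n) the image of 𝔭^n in K/℘(K). If m = pi > 0 is a multiple of p then bar(𝔭^{−pi+1}) = bar(𝔭^{−pi}), whereas if m > 0 is prime to p then bar(𝔭^{−m+1}) has F_p-codimension f in bar(𝔭^{−m}). In particular K/℘(K) has countably infinite dimension over F_p. -/

import Mathlib

/- STATEMENT 11: for K = k((π)) of characteristic p with residue field k of degree f
over F_p, writing bar(𝔭^n) for the image of 𝔭^n in K/℘(K): if m = p·i > 0 then
bar(𝔭^{-pi+1}) = bar(𝔭^{-pi}); if m > 0 is prime to p then bar(𝔭^{-m+1}) has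
F_p-codimension f in bar(𝔭^{-m}) (equivalently, additive index p^f); and K/℘(K)
is countably infinite dimensional over F_p (equivalently, countably infinite). -/

/-- The fractional ideal `𝔭^{-n}` of the Laurent series field, as an additive
subgroup: series whose coefficients vanish in degrees `< -n`. -/
def fracIdeal (k : Type*) [Field k] (n : ℤ) : AddSubgroup (LaurentSeries k) where
  carrier := {x : LaurentSeries k | ∀ i : ℤ, i < -n → x.coeff i = 0}
  zero_mem' := by intro i _; exact HahnSeries.coeff_zero
  add_mem' := by
    intro a b ha hb i hi
    rw [HahnSeries.coeff_add, ha i hi, hb i hi, add_zero]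
  neg_mem' := by
    intro a ha i hi
    rw [HahnSeries.coeff_neg, ha i hi, neg_zero]

/-- The Artin–Schreier map `℘(x) = x^p - x` as an additive group homomorphism of
a commutative ring of characteristic `p`. -/
def artinSchreier (p : ℕ) [Fact p.Prime] (K : Type*) [CommRing K] [CharP K p] :
    K →+ K where
  toFun x := x ^ p - x
  map_zero' := by
    simp [zero_pow (Fact.out (p := p.Prime)).pos.ne']
  map_add' a b := by
    show (a + b) ^ p - (a + b) = (a ^ p - a) + (b ^ p - b)
    rw [add_pow_char]
    ring

open HahnSeries

section Aux

variable {p : ℕ} [Fact p.Prime] {k : Type*} [Field k]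

lemma artinSchreier_apply {K : Type*} [CommRing K] [CharP K p] (x : K) :
    artinSchreier p K x = x ^ p - x := rfl

lemma fracIdeal_mono {a b : ℤ} (h : a ≤ b) : fracIdeal k a ≤ fracIdeal k b := by
  intro x hx i hi
  exact hx i (by omega)

lemma mem_fracIdeal_iff {a : ℤ} {x : LaurentSeries k} :
    x ∈ fracIdeal k a ↔ ∀ i : ℤ, i < -a → x.coeff i = 0 := Iff.rfl

lemma single_mem_fracIdeal (n : ℤ) (a : k) : single (-n) a ∈ fracIdeal k n := by
  intro i hi
  exact coeff_single_of_ne (by omega)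

lemma mul_mem_fracIdeal {a b : ℤ} {x y : LaurentSeries k} (hx : x ∈ fracIdeal k a)
    (hy : y ∈ fracIdeal k b) : x * y ∈ fracIdeal k (a + b) := by
  intro i hi
  by_contra h
  have hmem : i ∈ (x * y).support := h
  obtain ⟨s, hs, t, ht, hst⟩ := Set.mem_add.mp (support_mul_subset hmem)
  have h1 : ¬ s < -a := fun hlt => hs (hx s hlt)
  have h2 : ¬ t < -b := fun hlt => ht (hy t hlt)
  omega

lemma pow_mem_fracIdeal {a : ℤ} {x : LaurentSeries k} (hx : x ∈ fracIdeal k a) (n : ℕ) :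
    x ^ n ∈ fracIdeal k ((n : ℤ) * a) := by
  induction n with
  | zero =>
    intro i hi
    rw [pow_zero, coeff_one, if_neg]
    intro h
    simp only [Nat.cast_zero, zero_mul] at hi
    omega
  | succ n ih =>
    have := mul_mem_fracIdeal ih hx
    rw [pow_succ]
    convert this using 2
    push_cast
    ring

lemma coeff_pow_order {x : LaurentSeries k} (hx : x ≠ 0) (n : ℕ) :
    (x ^ n).coeff (n • x.order) = x.leadingCoeff ^ n := by
  induction n with
  | zero => simp [coeff_one]
  | succ n ih =>
    have hxn : x ^ n ≠ 0 := pow_ne_zero _ hx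
    have horder : (x ^ n).order = n • x.order := order_pow x n
    rw [pow_succ, succ_nsmul, ← horder, coeff_mul_order_add_order, leadingCoeff_eq (x := x ^ n),
      horder, ih, pow_succ]

/-- Key lemma: if `y^p - y ∈ 𝔭^{-m}` with `m > 0` prime to `p`, then the coefficient of
`y^p - y` in degree `-m` vanishes. -/
lemma AS_coeff_zero {m : ℕ} (hm : 0 < m) (hpm : ¬ p ∣ m) (y : LaurentSeries k)
    (h : y ^ p - y ∈ fracIdeal k m) : (y ^ p - y).coeff (-(m : ℤ)) = 0 := by
  have hp2 : 2 ≤ p := (Fact.out : p.Prime).two_le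
  rcases eq_or_ne y 0 with rfl | hy
  · simp [zero_pow (by omega : p ≠ 0)]
  have hyp : y ^ p ≠ 0 := pow_ne_zero _ hy
  set o := y.order with ho
  have hordp : (y ^ p).order = p • o := order_pow y p
  have hsm : (p • o : ℤ) = (p : ℤ) * o := by simp [nsmul_eq_mul]
  rcases le_or_gt 0 o with h0 | h0
  · have h1 : y.coeff (-(m : ℤ)) = 0 := coeff_eq_zero_of_lt_order (by omega)
    have h2 : (y ^ p).coeff (-(m : ℤ)) = 0 := by
      apply coeff_eq_zero_of_lt_order
      rw [hordp]
      have : (0 : ℤ) ≤ (p : ℤ) * o := by positivity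
      omega
    rw [coeff_sub, h1, h2, sub_zero]
  · have hlc : y.leadingCoeff ≠ 0 := leadingCoeff_ne_zero.mpr hy
    have hcoef : (y ^ p).coeff (p • o) = y.leadingCoeff ^ p := coeff_pow_order hy p
    have hlt : (p : ℤ) * o < o := by nlinarith [(by exact_mod_cast hp2 : (2:ℤ) ≤ (p:ℤ))]
    have hge : -(m : ℤ) ≤ (p : ℤ) * o := by
      by_contra hlt2
      push_neg at hlt2
      have hz := h ((p : ℤ) * o) hlt2
      have hy0 : y.coeff ((p : ℤ) * o) = 0 := coeff_eq_zero_of_lt_order (by omega)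
      rw [coeff_sub, hy0, sub_zero] at hz
      rw [hsm] at hcoef
      exact pow_ne_zero _ hlc (hcoef ▸ hz)
    have hne : -(m : ℤ) ≠ (p : ℤ) * o := by
      intro heq
      apply hpm
      have : (p : ℤ) ∣ (m : ℤ) := ⟨-o, by rw [mul_neg]; omega⟩
      exact_mod_cast this
    have h2 : (y ^ p).coeff (-(m : ℤ)) = 0 := by
      apply coeff_eq_zero_of_lt_order
      rw [hordp]
      omega
    have h1 : y.coeff (-(m : ℤ)) = 0 := coeff_eq_zero_of_lt_order (by omega)
    rw [coeff_sub, h1, h2, sub_zero]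

variable [CharP (LaurentSeries k) p]

/-- Key lemma: if `x ∈ 𝔭^{-m}` lies in `𝔭^{-m+1} ⊔ ℘(K)` with `m > 0` prime to `p`, then
its coefficient in degree `-m` vanishes. -/
lemma coeff_zero_of_mem_sup {m : ℕ} (hm : 0 < m) (hpm : ¬ p ∣ m)
    {x : LaurentSeries k} (hx : x ∈ fracIdeal k m)
    (hx2 : x ∈ fracIdeal k ((m : ℤ) - 1) ⊔ (artinSchreier p (LaurentSeries k)).range) :
    x.coeff (-(m : ℤ)) = 0 := by
  obtain ⟨z, hz, r, hr, hzr⟩ := AddSubgroup.mem_sup.mp hx2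
  obtain ⟨y, hy⟩ := hr
  rw [artinSchreier_apply] at hy
  have hrmem : y ^ p - y ∈ fracIdeal k m := by
    rw [hy]
    have : r = x - z := by rw [← hzr]; ring
    rw [this]
    exact sub_mem hx (fracIdeal_mono (by omega) hz)
  have h1 : z.coeff (-(m : ℤ)) = 0 := hz _ (by omega)
  have h2 : r.coeff (-(m : ℤ)) = 0 := by
    rw [← hy]
    exact AS_coeff_zero hm hpm y hrmem
  rw [← hzr, coeff_add, h1, h2, add_zero]

lemma neg_one_le_range :
    fracIdeal k (-1) ≤ (artinSchreier p (LaurentSeries k)).range := by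
  intro x hx
  have hp2 : 2 ≤ p := (Fact.out : p.Prime).two_le
  -- powers of x lie deep
  have hxmem : ∀ j : ℕ, ∀ d : ℤ, d < (p ^ j : ℕ) → (x ^ p ^ j : LaurentSeries k).coeff d = 0 := by
    intro j d hd
    have := pow_mem_fracIdeal hx (p ^ j)
    exact this d (by omega)
  set S : ℕ → LaurentSeries k := fun N => -∑ j ∈ Finset.range (N + 1), x ^ p ^ j with hSdef
  have hS1 : ∀ N, S N ∈ fracIdeal k (-1) := by
    intro N
    apply neg_mem
    apply AddSubgroup.sum_mem
    intro j _
    have h1 : x ^ p ^ j ∈ fracIdeal k ((p ^ j : ℕ) * (-1 : ℤ)) := pow_mem_fracIdeal hx _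
    refine fracIdeal_mono ?_ h1
    have : (1 : ℤ) ≤ (p ^ j : ℕ) := by exact_mod_cast Nat.one_le_pow _ _ (by omega)
    omega
  have hNlt : ∀ N : ℕ, (N : ℤ) < (p ^ (N + 1) : ℕ) := by
    intro N
    have h1 : N + 1 < 2 ^ (N + 1) := Nat.lt_two_pow_self
    have h2 : 2 ^ (N + 1) ≤ p ^ (N + 1) := Nat.pow_le_pow_left hp2 _
    exact_mod_cast by omega
  have hstep : ∀ N, S (N + 1) = S N - x ^ p ^ (N + 1) := by
    intro N
    simp only [hSdef]
    rw [Finset.sum_range_succ]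
    ring
  have stab2 : ∀ M N : ℕ, M ≤ N → ∀ d : ℤ, d ≤ (M : ℤ) → (S N).coeff d = (S M).coeff d := by
    intro M N h
    induction N, h using Nat.le_induction with
    | base => intro d _; rfl
    | succ N hMN ih =>
      intro d hd
      rw [hstep, coeff_sub, hxmem (N + 1) d (by have := hNlt N; omega), sub_zero]
      exact ih d hd
  set g : ℤ → k := fun d => (S d.toNat).coeff d with hgdef
  have hg0 : ∀ d : ℤ, d < 1 → g d = 0 := fun d hd => hS1 _ d (by omega)
  have hbdd : BddBelow (Function.support g) :=
    forallLTEqZero_supp_BddBelow g 1 (fun d hd => hg0 d hd)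
  set y : LaurentSeries k := ofSuppBddBelow g hbdd with hydef
  have hycoeff : ∀ d : ℤ, y.coeff d = g d := fun d => rfl
  have hy : ∀ (N : ℕ) (d : ℤ), d ≤ (N : ℤ) → y.coeff d = (S N).coeff d := by
    intro N d hd
    rw [hycoeff, hgdef]
    have h1 : d ≤ (d.toNat : ℤ) := Int.self_le_toNat d
    have h2 : d.toNat ≤ N := Int.toNat_le.mpr hd
    exact (stab2 d.toNat N h2 d h1).symm
  have hyfrac : y ∈ fracIdeal k (-1) := by
    intro i hi
    rw [hycoeff]
    exact hg0 i (by omega)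
  refine ⟨y, ?_⟩
  rw [artinSchreier_apply]
  ext d
  rcases lt_or_ge d 1 with hd | hd
  · have hyp : (y ^ p).coeff d = 0 := by
      have := pow_mem_fracIdeal hyfrac p
      refine this d ?_
      have h1p : (1 : ℤ) ≤ (p : ℤ) := by exact_mod_cast (by omega : 1 ≤ p)
      omega
    rw [coeff_sub, hyp, hyfrac d (by omega), sub_zero, hx d (by omega)]
  · set N := d.toNat with hN
    have hdN : d ≤ (N : ℤ) := Int.self_le_toNat d
    have hDmem : y - S N ∈ fracIdeal k (-((N : ℤ) + 1)) := by
      intro e he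
      rw [coeff_sub, hy N e (by omega), sub_self]
    have hkey : y ^ p - y = (S N ^ p - S N) + ((y - S N) ^ p - (y - S N)) := by
      rw [sub_pow_char]
      ring
    have h1 : ((y - S N) ^ p).coeff d = 0 := by
      have := pow_mem_fracIdeal hDmem p
      apply this
      have hp2' : (2 : ℤ) ≤ (p : ℤ) := by exact_mod_cast hp2
      nlinarith
    have h2 : (y - S N).coeff d = 0 := hDmem d (by omega)
    have hnegpow : ∀ T : LaurentSeries k, (-T) ^ p = -(T ^ p) := by
      intro T
      have h := sub_pow_char (p := p) (0 : LaurentSeries k) T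
      simpa [zero_pow (by omega : p ≠ 0)] using h
    have hT : S N ^ p - S N = x - x ^ p ^ (N + 1) := by
      simp only [hSdef]
      have hterm2 : ∀ j ∈ Finset.range (N + 1), (x ^ p ^ j) ^ p = x ^ p ^ (j + 1) := by
        intro j _
        rw [← pow_mul, ← pow_succ]
      have hT' : (∑ j ∈ Finset.range (N + 1), x ^ p ^ j) ^ p
          = ∑ j ∈ Finset.range (N + 1), x ^ p ^ (j + 1) := by
        rw [sum_pow_char]
        exact Finset.sum_congr rfl hterm2
      rw [hnegpow, hT']
      have htel : ∑ j ∈ Finset.range (N + 2), x ^ p ^ j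
          = (∑ j ∈ Finset.range (N + 1), x ^ p ^ (j + 1)) + x ^ p ^ 0 :=
        Finset.sum_range_succ' _ _
      have htel2 : ∑ j ∈ Finset.range (N + 2), x ^ p ^ j
          = (∑ j ∈ Finset.range (N + 1), x ^ p ^ j) + x ^ p ^ (N + 1) :=
        Finset.sum_range_succ _ _
      have hcomb : (∑ j ∈ Finset.range (N + 1), x ^ p ^ (j + 1))
          = (∑ j ∈ Finset.range (N + 1), x ^ p ^ j) + x ^ p ^ (N + 1) - x ^ p ^ 0 := by
        rw [← htel2]
        rw [htel]
        ring
      rw [hcomb, pow_zero, pow_one]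
      ring
    rw [hkey, coeff_add, hT, coeff_sub, coeff_sub, h1, h2,
      hxmem (N + 1) d (by have := hNlt N; omega)]
    ring

lemma fracIdeal_pi_le [Fintype k] [CharP k p] {i : ℕ} (hi : 0 < i) :
    fracIdeal k ((p : ℤ) * i) ≤
      fracIdeal k ((p : ℤ) * i - 1) ⊔ (artinSchreier p (LaurentSeries k)).range := by
  intro x hx
  have hp2 : 2 ≤ p := (Fact.out : p.Prime).two_le
  have hii : (i : ℤ) < (p : ℤ) * i := by
    have h1 : (2 : ℤ) ≤ (p : ℤ) := by exact_mod_cast hp2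
    have h2 : (1 : ℤ) ≤ (i : ℤ) := by exact_mod_cast hi
    nlinarith
  set a := x.coeff (-((p : ℤ) * i)) with ha
  obtain ⟨c, hc⟩ : ∃ c : k, c ^ p = a := by
    obtain ⟨c, hc⟩ := Finite.injective_iff_surjective.mp (frobenius_inj k p) a
    exact ⟨c, by rw [← hc, frobenius_def]⟩
  set y : LaurentSeries k := single (-(i : ℤ)) c with hydef
  have hy : artinSchreier p (LaurentSeries k) y = single (-((p : ℤ) * i)) a - single (-(i : ℤ)) c := by
    have hsm : p • (-(i : ℤ)) = -((p : ℤ) * i) := by rw [nsmul_eq_mul]; ring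
    rw [artinSchreier_apply, hydef, single_pow, hsm, hc]
  have hxy : x - artinSchreier p (LaurentSeries k) y ∈ fracIdeal k ((p : ℤ) * i - 1) := by
    intro j hj
    rw [hy]
    have hj' : j ≤ -((p : ℤ) * i) := by omega
    rw [coeff_sub, coeff_sub]
    rcases eq_or_lt_of_le hj' with heq | hlt
    · rw [heq, coeff_single_same, coeff_single_of_ne (by omega), ← ha]
      ring
    · rw [hx j hlt, coeff_single_of_ne (by omega), coeff_single_of_ne (by omega)]
      ring
  have hxeq : x = (x - artinSchreier p (LaurentSeries k) y) + artinSchreier p (LaurentSeries k) y := by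
    ring
  rw [hxeq]
  exact add_mem (AddSubgroup.mem_sup_left hxy)
    (AddSubgroup.mem_sup_right ⟨y, rfl⟩)

lemma relindex_eq_pf [Fintype k] {f : ℕ} (hf : Fintype.card k = p ^ f)
    {m : ℕ} (hm : 0 < m) (hpm : ¬ p ∣ m) :
    AddSubgroup.relIndex
        (fracIdeal k ((m : ℤ) - 1) ⊔ (artinSchreier p (LaurentSeries k)).range)
        (fracIdeal k (m : ℤ) ⊔ (artinSchreier p (LaurentSeries k)).range) = p ^ f := by
  set R := (artinSchreier p (LaurentSeries k)).range with hR
  set A := fracIdeal k (m : ℤ) with hA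
  set H := fracIdeal k ((m : ℤ) - 1) ⊔ R with hH
  have hAH : A ⊔ H = A ⊔ R := by
    rw [hH, ← sup_assoc, sup_eq_left.mpr (fracIdeal_mono (by omega))]
  -- the coefficient map on A
  let φ : ↥A →+ k :=
    { toFun := fun x => (x : LaurentSeries k).coeff (-(m : ℤ))
      map_zero' := by simp
      map_add' := fun a b => by simp [coeff_add] }
  have hsurj : Function.Surjective φ := by
    intro a
    exact ⟨⟨single (-(m : ℤ)) a, single_mem_fracIdeal (m : ℤ) a⟩, coeff_single_same _ _⟩
  have hker : φ.ker = H.addSubgroupOf A := by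
    ext x
    rw [AddMonoidHom.mem_ker, AddSubgroup.mem_addSubgroupOf]
    constructor
    · intro h0
      refine AddSubgroup.mem_sup_left ?_
      intro i hi
      rcases eq_or_lt_of_le (by omega : i ≤ -(m : ℤ)) with heq | hlt
      · rw [heq]; exact h0
      · exact x.2 i hlt
    · intro hHmem
      exact coeff_zero_of_mem_sup hm hpm x.2 hHmem
  have e2 : (↥A ⧸ φ.ker) ≃+ k := QuotientAddGroup.quotientKerEquivOfSurjective φ hsurj
  have e1 := QuotientAddGroup.quotientInfEquivSumNormalQuotient A H
  have hcard : Nat.card (↥(A ⊔ H) ⧸ H.addSubgroupOf (A ⊔ H)) = p ^ f := by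
    rw [← Nat.card_congr e1.toEquiv, ← hker, Nat.card_congr e2.toEquiv,
      Nat.card_eq_fintype_card, hf]
  have : AddSubgroup.relIndex H (A ⊔ R) = Nat.card (↥(A ⊔ H) ⧸ H.addSubgroupOf (A ⊔ H)) := by
    rw [← hAH]
    exact AddSubgroup.index_eq_card _
  rw [this, hcard]

lemma AS_sq_ne {n m : ℕ} (hnm : n < m) :
    (QuotientAddGroup.mk (single (-((n * p + 1 : ℕ) : ℤ)) (1 : k)) :
        LaurentSeries k ⧸ (artinSchreier p (LaurentSeries k)).range) ≠
      QuotientAddGroup.mk (single (-((m * p + 1 : ℕ) : ℤ)) (1 : k)) := by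
  have hp2 : 2 ≤ p := (Fact.out : p.Prime).two_le
  intro heq
  rw [QuotientAddGroup.eq_iff_sub_mem] at heq
  obtain ⟨y, hy⟩ := heq
  rw [artinSchreier_apply] at hy
  set M : ℕ := m * p + 1 with hM
  have hmem : y ^ p - y ∈ fracIdeal k (M : ℤ) := by
    rw [hy]
    refine sub_mem ?_ ?_
    · refine fracIdeal_mono ?_ (single_mem_fracIdeal ((n * p + 1 : ℕ) : ℤ) 1)
      have : n * p + 1 ≤ M := by rw [hM]; nlinarith
      exact_mod_cast this
    · exact single_mem_fracIdeal (M : ℤ) 1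
  have hMpos : 0 < M := by omega
  have hMnd : ¬ p ∣ M := by
    rw [hM]
    intro hd
    have : p ∣ 1 := (Nat.dvd_add_right ⟨m, by ring⟩).mp hd
    rw [Nat.dvd_one] at this
    omega
  have h0 := AS_coeff_zero hMpos hMnd y hmem
  rw [hy, coeff_sub, coeff_single_of_ne ?hne, coeff_single_same] at h0
  · simp at h0
  case hne =>
    have hlt : n * p + 1 < M := by rw [hM]; nlinarith
    intro hcontra
    rw [neg_inj] at hcontra
    have : M = n * p + 1 := by exact_mod_cast hcontra
    omega

end Aux

theorem stmt11 (p : ℕ) [Fact p.Prime] (k : Type*) [Field k] [Fintype k] [CharP k p]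
    (f : ℕ) (hf : Fintype.card k = p ^ f) :
    letI : CharP (LaurentSeries k) p :=
      charP_of_injective_algebraMap (algebraMap k (LaurentSeries k)).injective p
    ∀ R : AddSubgroup (LaurentSeries k), R = (artinSchreier p (LaurentSeries k)).range →
      ((∀ i : ℕ, 0 < i →
          fracIdeal k ((p : ℤ) * i - 1) ⊔ R = fracIdeal k ((p : ℤ) * i) ⊔ R) ∧
        (∀ m : ℕ, 0 < m → ¬ p ∣ m →
          AddSubgroup.relIndex (fracIdeal k ((m : ℤ) - 1) ⊔ R) (fracIdeal k (m : ℤ) ⊔ R)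
            = p ^ f) ∧
        Countable (LaurentSeries k ⧸ R) ∧ Infinite (LaurentSeries k ⧸ R)) := by
  intro R hR
  haveI : CharP (LaurentSeries k) p :=
    charP_of_injective_algebraMap (algebraMap k (LaurentSeries k)).injective p
  subst hR
  refine ⟨?_, ?_, ?_, ?_⟩
  · -- multiples of p
    intro i hi
    apply le_antisymm
    · exact sup_le_sup_right (fracIdeal_mono (by omega)) _
    · exact sup_le (fracIdeal_pi_le hi) le_sup_right
  · -- index p^f for m prime to p
    intro m hm hpm
    exact relindex_eq_pf hf hm hpm
  · -- countable
    set Rr := (artinSchreier p (LaurentSeries k)).range with hRr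
    set π := QuotientAddGroup.mk' Rr with hπ
    have fin : ∀ n : ℕ, (⇑π '' (fracIdeal k ((n : ℤ) - 1) : Set (LaurentSeries k))).Finite := by
      intro n
      induction n with
      | zero =>
        refine Set.Finite.subset (Set.finite_singleton 0) ?_
        rintro q ⟨x, hx, rfl⟩
        have hcast : ((0 : ℕ) : ℤ) - 1 = -1 := by norm_num
        rw [hcast] at hx
        simp only [Set.mem_singleton_iff]
        rw [QuotientAddGroup.mk'_apply, QuotientAddGroup.eq_zero_iff]
        exact neg_one_le_range hx
      | succ n ih =>
        have hcast : ((n + 1 : ℕ) : ℤ) - 1 = (n : ℤ) := by push_cast; ring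
        rw [hcast]
        refine Set.Finite.subset (Set.finite_iUnion (fun a : k =>
          Set.Finite.image (fun q => π (single (-(n : ℤ)) a) + q) ih)) ?_
        rintro q ⟨x, hx, rfl⟩
        refine Set.mem_iUnion.mpr ⟨x.coeff (-(n : ℤ)), ?_⟩
        refine ⟨π (x - single (-(n : ℤ)) (x.coeff (-(n : ℤ)))), ?_, ?_⟩
        · refine ⟨x - single (-(n : ℤ)) (x.coeff (-(n : ℤ))), ?_, rfl⟩
          intro i hi
          rw [coeff_sub]
          rcases eq_or_lt_of_le (by omega : i ≤ -(n : ℤ)) with heq | hlt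
          · rw [heq, coeff_single_same, sub_self]
          · rw [hx i hlt, coeff_single_of_ne (by omega), sub_zero]
        · show π (single (-(n : ℤ)) (x.coeff (-(n : ℤ))))
              + π (x - single (-(n : ℤ)) (x.coeff (-(n : ℤ)))) = π x
          rw [← map_add]
          congr 1
          ring
    have huniv : ∀ q : LaurentSeries k ⧸ Rr,
        ∃ n : ℕ, q ∈ ⇑π '' (fracIdeal k ((n : ℤ) - 1) : Set (LaurentSeries k)) := by
      intro q
      obtain ⟨x, rfl⟩ := QuotientAddGroup.mk'_surjective Rr q
      rcases eq_or_ne x 0 with rfl | hx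
      · exact ⟨0, 0, zero_mem _, rfl⟩
      · refine ⟨(1 - x.order).toNat, x, ?_, rfl⟩
        intro i hi
        apply coeff_eq_zero_of_lt_order
        have h1 : (1 - x.order) ≤ ((1 - x.order).toNat : ℤ) := Int.self_le_toNat _
        omega
    rw [← Set.countable_univ_iff]
    refine Set.Countable.mono ?_ (Set.countable_iUnion (fun n => (fin n).countable))
    intro q _
    obtain ⟨n, hn⟩ := huniv q
    exact Set.mem_iUnion.mpr ⟨n, hn⟩
  · -- infinite
    refine Infinite.of_injective
      (fun n : ℕ => (QuotientAddGroup.mk (single (-((n * p + 1 : ℕ) : ℤ)) (1 : k)) :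
        LaurentSeries k ⧸ (artinSchreier p (LaurentSeries k)).range)) ?_
    intro a b hab
    by_contra hne
    rcases lt_trichotomy a b with h | h | h
    · exact AS_sq_ne h hab
    · exact hne h
    · exact AS_sq_ne h hab.symm
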